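/- The special orthogonal group of the lattice M of symmetric matrices (A,B;B,C) with NA, B, C ∈ ℤ, equipped with the quadratic form (v,v) = −2N·det(v), acting by v ↦ XvXᵗ, is exactly Γ₀(N)* (the extension of Γ₀(N) by all Atkin–Lehner involutions). -/

import Mathlib

/-- The lattice `M` of symmetric matrices `(A,B;B,C)` with `NA, B, C ∈ ℤ`,
inside the real quadratic space of symmetric `2×2` matrices with
`(v,v) = −2N·det v`. -/
def LatticeM (N : ℕ) : Set (Matrix (Fin 2) (Fin 2) ℝ) :=
  {v | v 1 0 = v 0 1 ∧
    ∃ a b c : ℤ, v 0 0 = (a : ℝ) / N ∧ v 0 1 = (b : ℝ) ∧ v 1 1 = (c : ℝ)}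

/-- The image of `Γ₀(N)` in `SL₂(ℝ)`: integral matrices of determinant one whose
lower-left entry is divisible by `N`. -/
def Gamma0InSLR (N : ℕ) : Set (Matrix.SpecialLinearGroup (Fin 2) ℝ) :=
  {X | ∃ a b c d : ℤ, (N : ℤ) ∣ c ∧
    X.1 0 0 = (a : ℝ) ∧ X.1 0 1 = (b : ℝ) ∧ X.1 1 0 = (c : ℝ) ∧ X.1 1 1 = (d : ℝ)}

/-- The set of Atkin–Lehner involutions `W_e`, `e ∥ N`, in `SL₂(ℝ)`: matrices
`(1/√e)(ex, y; Nz, ew)` with `x, y, z, w ∈ ℤ` and `xwe − yzN/e = 1`. -/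
def AtkinLehnerSet (N : ℕ) : Set (Matrix.SpecialLinearGroup (Fin 2) ℝ) :=
  {X | ∃ e x y z w : ℤ, 0 < e ∧ e ∣ (N : ℤ) ∧ IsCoprime e ((N : ℤ) / e) ∧
    x * w * e - y * z * ((N : ℤ) / e) = 1 ∧
    X.1 0 0 = (e * x : ℤ) / Real.sqrt e ∧ X.1 0 1 = (y : ℤ) / Real.sqrt e ∧
    X.1 1 0 = ((N : ℤ) * z : ℤ) / Real.sqrt e ∧ X.1 1 1 = (e * w : ℤ) / Real.sqrt e}

/-- `Γ₀(N)*`, the subgroup of `SL₂(ℝ)` generated by `Γ₀(N)` and all Atkin–Lehner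
involutions `W_e` for `e ∥ N`. -/
def Gamma0Star (N : ℕ) : Subgroup (Matrix.SpecialLinearGroup (Fin 2) ℝ) :=
  Subgroup.closure (Gamma0InSLR N ∪ AtkinLehnerSet N)

/- ## Auxiliary material -/

namespace Gamma0StarAux

lemma conj_apply (X v : Matrix (Fin 2) (Fin 2) ℝ) (i j : Fin 2) :
    (X * v * X.transpose) i j =
      X i 0 * v 0 0 * X j 0 + X i 0 * v 0 1 * X j 1 +
      X i 1 * v 1 0 * X j 0 + X i 1 * v 1 1 * X j 1 := by
  simp [Matrix.mul_apply, Fin.sum_univ_two, Matrix.transpose_apply]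
  ring

/-- The key arithmetic lemma. -/
lemma key_int (n α p q m : ℤ) (hα : 1 ≤ α)
    (h1 : α ∣ p * m) (h2 : α ∣ q * m) (h3 : α ∣ m * m)
    (h4 : α ∣ n * (p * p)) (h5 : α ∣ n * (q * q))
    (hdet : α * (m - 1) = n * (p * q)) :
    ∃ e x y z w : ℤ, 0 < e ∧ e ∣ n ∧ 0 < x ∧
      α = e * (x * x) ∧ p = x * y ∧ q = x * z ∧ m = e * x * w ∧
      x * w * e - y * z * (n / e) = 1 := by
  set g : ℤ := (Int.gcd q m : ℤ) with hgdef
  set x : ℤ := (Int.gcd p g : ℤ) with hxdef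
  have hxp : x ∣ p := Int.gcd_dvd_left p g
  have hgq : g ∣ q := Int.gcd_dvd_left q m
  have hgm : g ∣ m := Int.gcd_dvd_right q m
  have hxg : x ∣ g := Int.gcd_dvd_right p g
  have hxq : x ∣ q := hxg.trans hgq
  have hxm : x ∣ m := hxg.trans hgm
  have hx0 : 0 < x := by
    rcases lt_or_eq_of_le (Int.natCast_nonneg (Int.gcd p g) : (0:ℤ) ≤ x) with h|h
    · exact h
    · exfalso
      have h0 : Int.gcd p g = 0 := by exact_mod_cast h.symm
      rw [Int.gcd_eq_zero_iff] at h0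
      have hg0 : Int.gcd q m = 0 := by
        have := h0.2; rw [hgdef] at this; exact_mod_cast this
      rw [Int.gcd_eq_zero_iff] at hg0
      rw [h0.1, hg0.1] at hdet
      simp at hdet
      omega
  have hxne : x ≠ 0 := hx0.ne'
  -- Bezout expression for x
  obtain ⟨A, E, F, hxeq⟩ : ∃ A E F : ℤ, x = p * A + q * E + m * F := by
    refine ⟨Int.gcdA p g, Int.gcdA q m * Int.gcdB p g, Int.gcdB q m * Int.gcdB p g, ?_⟩
    have hb1 := Int.gcd_eq_gcd_ab p g
    have hb2 := Int.gcd_eq_gcd_ab q m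
    rw [← hxdef] at hb1
    rw [← hgdef] at hb2
    linear_combination hb1 + Int.gcdB p g * hb2
  -- x^2 divides α
  obtain ⟨k, hk⟩ := hxm
  have hcop : IsCoprime x (m - 1) := ⟨k, -1, by linear_combination -hk⟩
  have hx2α : x * x ∣ α := by
    have hd : x * x ∣ α * (m - 1) := by
      rw [hdet]
      exact Dvd.dvd.mul_left (mul_dvd_mul hxp hxq) n
    exact (hcop.mul_left hcop).dvd_of_dvd_mul_right hd
  obtain ⟨e, he⟩ := hx2α
  have he' : α = e * (x * x) := by linarith [he]
  have he0 : 0 < e := by nlinarith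
  -- α ∣ n * (x*x)
  have hα_nx2 : α ∣ n * (x * x) := by
    have heq : n * (x * x) = A * A * (n * (p * p)) + E * E * (n * (q * q))
        + F * F * (n * (m * m)) + (2 * (A * E)) * (n * (p * q))
        + (2 * (A * F)) * (n * (p * m)) + (2 * (E * F)) * (n * (q * m)) := by
      rw [hxeq]; ring
    rw [heq]
    have hpq : α ∣ n * (p * q) := ⟨m - 1, hdet.symm⟩
    exact dvd_add (dvd_add (dvd_add (dvd_add (dvd_add (h4.mul_left _) (h5.mul_left _))
      ((h3.mul_left n).mul_left _)) (hpq.mul_left _))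
      ((h1.mul_left n).mul_left _)) ((h2.mul_left n).mul_left _)
  have hen : e ∣ n := by
    rw [he'] at hα_nx2
    obtain ⟨t, ht⟩ := hα_nx2
    refine ⟨t, ?_⟩
    have hx2 : (x * x) ≠ 0 := mul_ne_zero hxne hxne
    have : (x * x) * n = (x * x) * (e * t) := by linarith [ht]
    exact mul_left_cancel₀ hx2 this
  -- α ∣ m * x
  have hα_mx : α ∣ m * x := by
    have heq : m * x = A * (p * m) + E * (q * m) + F * (m * m) := by rw [hxeq]; ring
    rw [heq]
    exact dvd_add (dvd_add (h1.mul_left _) (h2.mul_left _)) (h3.mul_left _)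
  have hexm : e * x ∣ m := by
    rw [he'] at hα_mx
    obtain ⟨t, ht⟩ := hα_mx
    refine ⟨t, ?_⟩
    have : x * m = x * (e * x * t) := by linarith [ht]
    exact mul_left_cancel₀ hxne this
  obtain ⟨y, hy⟩ := hxp
  obtain ⟨z, hz⟩ := hxq
  obtain ⟨w, hw⟩ := hexm
  obtain ⟨n', hn'⟩ := id hen
  have hne : n / e = n' := by rw [hn']; exact Int.mul_ediv_cancel_left _ he0.ne'
  refine ⟨e, x, y, z, w, he0, hen, hx0, he', hy, hz, by linarith [hw], ?_⟩
  rw [hne]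
  have key : (x * x) * (e * (e * x * w - 1)) = (x * x) * (e * (n' * (y * z))) := by
    have hd := hdet
    rw [he', hy, hz, hw, hn'] at hd
    linear_combination hd
  have k2 : e * (e * x * w - 1) = e * (n' * (y * z)) :=
    mul_left_cancel₀ (mul_ne_zero hxne hxne) key
  have k3 : e * x * w - 1 = n' * (y * z) := mul_left_cancel₀ he0.ne' k2
  linarith

/-- Integrality facts obtained from preservation of the lattice. -/
lemma pres_facts {N : ℕ} (hN : 0 < N) (Y : Matrix (Fin 2) (Fin 2) ℝ)
    (h : ∀ v ∈ LatticeM N, Y * v * Y.transpose ∈ LatticeM N) :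
    (∃ k : ℤ, Y 0 0 * Y 0 0 = k) ∧ (∃ k : ℤ, Y 0 0 * Y 1 0 = N * k) ∧
    (∃ k : ℤ, Y 1 0 * Y 1 0 = N * k) ∧ (∃ k : ℤ, N * (Y 0 1 * Y 0 1) = k) ∧
    (∃ k : ℤ, Y 0 1 * Y 1 1 = k) ∧ (∃ k : ℤ, Y 1 1 * Y 1 1 = k) ∧
    (∃ k : ℤ, Y 0 0 * Y 1 1 + Y 0 1 * Y 1 0 = k) := by
  have hNR : (N : ℝ) ≠ 0 := Nat.cast_ne_zero.2 hN.ne'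
  have m1 : (!![(1:ℝ)/N, 0; 0, 0] : Matrix (Fin 2) (Fin 2) ℝ) ∈ LatticeM N := by
    refine ⟨by simp, 1, 0, 0, by simp, by simp, by simp⟩
  have m2 : (!![(0:ℝ), 1; 1, 0] : Matrix (Fin 2) (Fin 2) ℝ) ∈ LatticeM N := by
    refine ⟨by simp, 0, 1, 0, by simp, by simp, by simp⟩
  have m3 : (!![(0:ℝ), 0; 0, 1] : Matrix (Fin 2) (Fin 2) ℝ) ∈ LatticeM N := by
    refine ⟨by simp, 0, 0, 1, by simp, by simp, by simp⟩
  obtain ⟨-, a1, b1, c1, e1a, e1b, e1c⟩ := h _ m1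
  obtain ⟨-, a2, b2, c2, e2a, e2b, e2c⟩ := h _ m2
  obtain ⟨-, a3, b3, c3, e3a, e3b, e3c⟩ := h _ m3
  rw [conj_apply] at e1a e1b e1c e2a e2b e2c e3a e3b e3c
  norm_num at e1a e1b e1c e2a e2b e2c e3a e3b e3c
  refine ⟨⟨a1, ?_⟩, ⟨b1, ?_⟩, ⟨c1, ?_⟩, ⟨a3, ?_⟩, ⟨b3, ?_⟩, ⟨c3, ?_⟩, ⟨b2, ?_⟩⟩
  · field_simp at e1a; linarith
  · field_simp at e1b; linarith
  · field_simp at e1c; linarith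
  · field_simp at e3a; linarith
  · linarith
  · linarith
  · linarith

lemma AL_preserves {N : ℕ} (hN : 0 < N) {X : Matrix.SpecialLinearGroup (Fin 2) ℝ}
    (hX : X ∈ AtkinLehnerSet N) :
    ∀ v ∈ LatticeM N, X.1 * v * X.1.transpose ∈ LatticeM N := by
  obtain ⟨e, x, y, z, w, he0, hen, -, -, h00, h01, h10, h11⟩ := hX
  obtain ⟨n, hn⟩ := hen
  rintro v ⟨hsym, A, B, C, hA, hB, hC⟩
  have hNR : (N : ℝ) ≠ 0 := Nat.cast_ne_zero.2 hN.ne'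
  have heR : (0:ℝ) < (e : ℝ) := by exact_mod_cast he0
  set s : ℝ := Real.sqrt (e : ℝ) with hsdef
  have hs2 : s * s = (e : ℝ) := Real.mul_self_sqrt heR.le
  have hs0 : s ≠ 0 := by
    have : 0 < s := Real.sqrt_pos.2 heR
    exact this.ne'
  have hNn : (N : ℝ) = (e : ℝ) * (n : ℝ) := by exact_mod_cast congrArg (Int.cast : ℤ → ℝ) hn
  have hnz : (n : ℝ) ≠ 0 := by
    intro h0
    rw [h0, mul_zero] at hNn
    exact hNR hNn
  have hE : (e : ℝ) = s * s := hs2.symm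
  have hNn' : (N : ℝ) = s * s * (n : ℝ) := by rw [hNn, hE]
  have hsym' : v 1 0 = (B : ℝ) := by rw [hsym, hB]
  refine ⟨?_, e * (x*x) * A + 2*x*y*B*N + n*(y*y)*C,
    x*z*A + (e*(x*w) + n*(y*z))*B + y*w*C,
    n*(z*z)*A + 2*N*z*w*B + e*(w*w)*C, ?_, ?_, ?_⟩
  · rw [conj_apply, conj_apply, hsym]; ring
  · rw [conj_apply, h00, h01, hA, hB, hsym', hC]
    push_cast
    rw [hNn', hE]
    field_simp
    ring
  · rw [conj_apply, h00, h01, h10, h11, hA, hB, hsym', hC]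
    push_cast
    rw [hNn', hE]
    field_simp
    ring
  · rw [conj_apply, h10, h11, hA, hB, hsym', hC]
    push_cast
    rw [hNn', hE]
    field_simp
    ring

lemma AL_inv {N : ℕ} {X : Matrix.SpecialLinearGroup (Fin 2) ℝ}
    (hX : X ∈ AtkinLehnerSet N) : X⁻¹ ∈ AtkinLehnerSet N := by
  obtain ⟨e, x, y, z, w, he0, hen, hcop, hrel, h00, h01, h10, h11⟩ := hX
  refine ⟨e, w, -y, -z, x, he0, hen, hcop, by linarith [hrel], ?_, ?_, ?_, ?_⟩ <;>
    rw [Matrix.SpecialLinearGroup.coe_inv, Matrix.adjugate_fin_two] <;>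
    push_cast <;> simp [h00, h01, h10, h11] <;> push_cast <;> ring

lemma G0_subset_AL {N : ℕ} : Gamma0InSLR N ⊆ AtkinLehnerSet N := by
  rintro X ⟨a, b, c, d, hc, h00, h01, h10, h11⟩
  obtain ⟨z, hz⟩ := hc
  have hdet : X.1 0 0 * X.1 1 1 - X.1 0 1 * X.1 1 0 = 1 := by
    have := X.2; rwa [Matrix.det_fin_two] at this
  rw [h00, h01, h10, h11] at hdet
  have hdz : a * d - b * ((N:ℤ) * z) = 1 := by
    rw [← hz]; exact_mod_cast hdet
  refine ⟨1, a, b, z, d, one_pos, one_dvd _, by simpa using isCoprime_one_left, ?_, ?_, ?_, ?_, ?_⟩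
  · rw [Int.ediv_one]; linarith [hdz]
  · simpa [Real.sqrt_one] using h00
  · simpa [Real.sqrt_one] using h01
  · rw [h10, hz]; push_cast; simp [Real.sqrt_one]
  · simpa [Real.sqrt_one] using h11


lemma pres_mul {N : ℕ} {X Y : Matrix.SpecialLinearGroup (Fin 2) ℝ}
    (hX : ∀ v ∈ LatticeM N, X.1 * v * X.1.transpose ∈ LatticeM N)
    (hY : ∀ v ∈ LatticeM N, Y.1 * v * Y.1.transpose ∈ LatticeM N) :
    ∀ v ∈ LatticeM N, (X * Y).1 * v * (X * Y).1.transpose ∈ LatticeM N := by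
  intro v hv
  have heq : (X * Y).1 * v * (X * Y).1.transpose
      = X.1 * (Y.1 * v * Y.1.transpose) * X.1.transpose := by
    simp [Matrix.transpose_mul, Matrix.mul_assoc]
  rw [heq]
  exact hX _ (hY v hv)

/-- The stabilizer of the lattice, as a subgroup. -/
def presSub (N : ℕ) : Subgroup (Matrix.SpecialLinearGroup (Fin 2) ℝ) where
  carrier := {X | (∀ v ∈ LatticeM N, X.1 * v * X.1.transpose ∈ LatticeM N) ∧
    (∀ v ∈ LatticeM N, (X⁻¹).1 * v * (X⁻¹).1.transpose ∈ LatticeM N)}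
  one_mem' := by constructor <;> intro v hv <;> simpa using hv
  mul_mem' := fun {a b} ha hb => ⟨pres_mul ha.1 hb.1, by
    rw [mul_inv_rev]; exact pres_mul hb.2 ha.2⟩
  inv_mem' := fun {a} ha => ⟨ha.2, by rw [inv_inv]; exact ha.1⟩

lemma backward {N : ℕ} (hN : 0 < N) {X : Matrix.SpecialLinearGroup (Fin 2) ℝ}
    (hX : X ∈ Gamma0Star N) : X ∈ presSub N := by
  refine (Subgroup.closure_le (presSub N)).2 ?_ hX
  rintro g (hg | hg)
  · exact ⟨AL_preserves hN (G0_subset_AL hg), AL_preserves hN (AL_inv (G0_subset_AL hg))⟩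
  · exact ⟨AL_preserves hN hg, AL_preserves hN (AL_inv hg)⟩

set_option maxHeartbeats 2000000 in
lemma forward {N : ℕ} (hN : 0 < N) {X : Matrix.SpecialLinearGroup (Fin 2) ℝ}
    (h1 : ∀ v ∈ LatticeM N, X.1 * v * X.1.transpose ∈ LatticeM N)
    (h2 : ∀ v ∈ LatticeM N, (X⁻¹).1 * v * (X⁻¹).1.transpose ∈ LatticeM N) :
    X ∈ AtkinLehnerSet N := by
  have hNZ : (N : ℤ) ≠ 0 := by exact_mod_cast hN.ne'
  have hNR : (N : ℝ) ≠ 0 := Nat.cast_ne_zero.2 hN.ne'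
  set a : ℝ := X.1 0 0 with hadef
  set b : ℝ := X.1 0 1 with hbdef
  set c : ℝ := X.1 1 0 with hcdef
  set d : ℝ := X.1 1 1 with hddef
  obtain ⟨⟨α, hα⟩, ⟨q, hq⟩, ⟨γ, hγ⟩, ⟨β, hβ⟩, ⟨r, hr⟩, ⟨δ, hδ⟩, ⟨σ, hσ⟩⟩ :=
    pres_facts hN X.1 h1
  rw [← hadef, ← hcdef] at hq
  rw [← hadef] at hα
  rw [← hcdef] at hγ
  rw [← hbdef] at hβ hr
  rw [← hddef] at hr hδ
  rw [← hadef, ← hbdef, ← hcdef, ← hddef] at hσ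
  have hi : (X⁻¹).1 = !![d, -b; -c, a] := by
    rw [Matrix.SpecialLinearGroup.coe_inv, Matrix.adjugate_fin_two]
  obtain ⟨-, ⟨s', hs'⟩, -, -, ⟨p', hp'⟩, -, -⟩ := pres_facts hN (X⁻¹).1 h2
  rw [hi] at hs' hp'
  norm_num at hs' hp'
  -- hs' : d * c = N * s' (up to sign), hp' : b * a = p' (up to sign)
  have hcd : c * d = (N : ℝ) * (-s' : ℤ) := by push_cast; linarith [hs']
  have hab : a * b = ((-p' : ℤ) : ℝ) := by push_cast; linarith [hp']
  set p : ℤ := -p' with hpdef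
  set s : ℤ := -s' with hsdef
  have hdetR : a * d - b * c = 1 := by
    have := X.2; rw [Matrix.det_fin_two] at this
    rw [hadef, hbdef, hcdef, hddef]; linarith [this]
  -- a*d is an integer
  have h2ad : 2 * (a * d) = (σ : ℝ) + 1 := by linarith [hσ, hdetR]
  have ht2 : (σ + 1) * (σ + 1) = 4 * (α * δ) := by
    have hR : ((σ:ℝ) + 1) * ((σ:ℝ) + 1) = ((4 * (α * δ) : ℤ) : ℝ) := by
      push_cast
      linear_combination (-(((σ:ℝ) + 1) + 2*a*d))*h2ad + 4*d*d*hα + 4*(α:ℝ)*hδ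
    exact_mod_cast hR
  have h2t : (2 : ℤ) ∣ (σ + 1) := by
    have hdd : (2:ℤ) ∣ (σ + 1) * (σ + 1) := ⟨2 * (α * δ), by linarith⟩
    rcases (Int.prime_two.dvd_mul).1 hdd with h | h <;> exact h
  obtain ⟨m, hm⟩ := h2t
  have had : a * d = (m : ℝ) := by
    have h' : ((σ + 1 : ℤ) : ℝ) = ((2 * m : ℤ) : ℝ) := by exact_mod_cast hm
    push_cast at h'; linarith [h2ad, h']
  have hbc : b * c = (m : ℝ) - 1 := by linarith [hdetR, had]
  by_cases ha0 : a = 0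
  · -- Fricke-type case
    have hm0 : m = 0 := by
      have : (m : ℝ) = 0 := by rw [← had, ha0]; ring
      exact_mod_cast this
    have hbc0 : b * c = -1 := by rw [hbc, hm0]; norm_num
    have hβγN : β * ((N:ℤ) * γ) = (N : ℤ) * 1 := by
      have hR : (β : ℝ) * ((N:ℝ) * (γ:ℝ)) = (N : ℝ) * 1 := by
        rw [← hβ, ← hγ]
        linear_combination ((N:ℝ)*(b*c - 1))*hbc0
      exact_mod_cast hR
    have hβγ : β * γ = 1 := by
      have : (N:ℤ) * (β * γ) = (N:ℤ) * 1 := by linarith [hβγN]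
      exact mul_left_cancel₀ hNZ this
    have hβ0 : 0 ≤ β := by
      have : (0:ℝ) ≤ (β:ℝ) := by rw [← hβ]; exact mul_nonneg (by positivity) (mul_self_nonneg _)
      exact_mod_cast this
    have hβ1 : β = 1 := by
      rcases Int.isUnit_iff.1 (isUnit_of_dvd_one ⟨γ, hβγ.symm⟩) with h | h <;> omega
    have hγ1 : γ = 1 := by rw [hβ1] at hβγ; linarith
    have hb2 : (N : ℝ) * (b * b) = 1 := by rw [hβ, hβ1]; norm_num
    have hc2 : c * c = (N : ℝ) := by rw [hγ, hγ1]; norm_num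
    have hsN : Real.sqrt N * Real.sqrt N = (N : ℝ) := Real.mul_self_sqrt (by positivity)
    have hsN0 : Real.sqrt N ≠ 0 := by
      have : (0:ℝ) < Real.sqrt N := Real.sqrt_pos.2 (by positivity)
      exact this.ne'
    have hcast : (((N : ℤ) : ℝ)) = (N : ℝ) := by push_cast; ring
    have hccase : (c - Real.sqrt N) * (c + Real.sqrt N) = 0 := by
      linear_combination hc2 - hsN
    rcases mul_eq_zero.1 hccase with hcc | hcc
    · -- c = √N
      have hcval : c = Real.sqrt N := by linarith
      have hb : b * Real.sqrt N = -1 := by rw [← hcval]; linarith [hbc0]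
      have hd : d * Real.sqrt N = -((N:ℝ) * r) := by
        linear_combination (-(N:ℝ))*hr + d*(Real.sqrt N)*hb + (-(b*d))*hsN
      refine ⟨(N : ℤ), 0, -1, 1, -r, by exact_mod_cast hN, dvd_refl _, ?_, ?_, ?_, ?_, ?_, ?_⟩
      · rw [Int.ediv_self hNZ]; exact isCoprime_one_right
      · rw [Int.ediv_self hNZ]; ring
      · rw [← hadef, ha0]; push_cast; simp
      · rw [← hbdef, eq_div_iff (by rw [hcast]; exact hsN0)]
        rw [hcast]; push_cast; linarith [hb]
      · rw [← hcdef, eq_div_iff (by rw [hcast]; exact hsN0)]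
        rw [hcast]; push_cast
        rw [hcval]; linarith [hsN]
      · rw [← hddef, eq_div_iff (by rw [hcast]; exact hsN0)]
        rw [hcast]; push_cast; linarith [hd]
    · -- c = -√N
      have hcval : c = -Real.sqrt N := by linarith
      have hb : b * Real.sqrt N = 1 := by
        have : b * c = b * (-Real.sqrt N) := by rw [← hcval]
        nlinarith [hbc0, this]
      have hd : d * Real.sqrt N = (N:ℝ) * r := by
        linear_combination ((N:ℝ))*hr + (-(d*(Real.sqrt N)))*hb + ((b*d))*hsN
      refine ⟨(N : ℤ), 0, 1, -1, r, by exact_mod_cast hN, dvd_refl _, ?_, ?_, ?_, ?_, ?_, ?_⟩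
      · rw [Int.ediv_self hNZ]; exact isCoprime_one_right
      · rw [Int.ediv_self hNZ]; ring
      · rw [← hadef, ha0]; push_cast; simp
      · rw [← hbdef, eq_div_iff (by rw [hcast]; exact hsN0)]
        rw [hcast]; push_cast; linarith [hb]
      · rw [← hcdef, eq_div_iff (by rw [hcast]; exact hsN0)]
        rw [hcast]; push_cast
        rw [hcval]; linarith [hsN]
      · rw [← hddef, eq_div_iff (by rw [hcast]; exact hsN0)]
        rw [hcast]; push_cast; linarith [hd]
  · -- main case : a ≠ 0
    have hα1 : 1 ≤ α := by
      have h0 : (0:ℝ) < (α:ℝ) := by rw [← hα]; exact mul_self_pos.2 ha0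
      have : (0:ℤ) < α := by exact_mod_cast h0
      omega
    -- integer divisibility facts
    have f1 : α ∣ p * m := by
      refine ⟨r, ?_⟩
      have e1 : (a*b)*(a*d) = (a*a)*(b*d) := by ring
      rw [hab, had, hα, hr] at e1
      exact_mod_cast e1
    have f2 : α ∣ q * m := by
      refine ⟨s, ?_⟩
      have e1 : (a*c)*(a*d) = (a*a)*(c*d) := by ring
      rw [hq, had, hα, hcd] at e1
      have e2 : (N:ℤ) * (q * m) = (N:ℤ) * (α * s) := by
        have e2R : ((N:ℤ) * (q * m) : ℤ) = ((N:ℤ) * (α * s) : ℤ) ∨ True := Or.inr trivial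
        clear e2R
        have : (((N:ℤ) * (q * m) : ℤ) : ℝ) = (((N:ℤ) * (α * s) : ℤ) : ℝ) := by
          push_cast; push_cast at e1; linear_combination e1
        exact_mod_cast this
      have := mul_left_cancel₀ hNZ e2
      linarith [this]
    have f3 : α ∣ m * m := by
      refine ⟨δ, ?_⟩
      have e1 : (a*d)*(a*d) = (a*a)*(d*d) := by ring
      rw [had, hα, hδ] at e1
      exact_mod_cast e1
    have f4 : α ∣ (N:ℤ) * (p * p) := by
      refine ⟨β, ?_⟩
      have e1 : (N:ℝ)*((a*b)*(a*b)) = (a*a)*((N:ℝ)*(b*b)) := by ring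
      rw [hab, hα, hβ] at e1
      exact_mod_cast e1
    have f5 : α ∣ (N:ℤ) * (q * q) := by
      refine ⟨γ, ?_⟩
      have e1 : (a*c)*(a*c) = (a*a)*(c*c) := by ring
      rw [hq, hα, hγ] at e1
      have e2 : (N:ℤ) * ((N:ℤ) * (q*q)) = (N:ℤ) * (α * γ) := by
        have : (((N:ℤ) * ((N:ℤ) * (q*q)) : ℤ) : ℝ) = (((N:ℤ) * (α * γ) : ℤ) : ℝ) := by
          push_cast; push_cast at e1; linear_combination e1
        exact_mod_cast this
      have := mul_left_cancel₀ hNZ e2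
      linarith [this]
    have fdet : α * (m - 1) = (N:ℤ) * (p * q) := by
      have e1 : (a*a)*(b*c) = (a*b)*(a*c) := by ring
      rw [hα, hbc, hab, hq] at e1
      have e2 : ((α * (m - 1) : ℤ) : ℝ) = (((N:ℤ) * (p * q) : ℤ) : ℝ) := by
        push_cast; push_cast at e1; linear_combination e1
      exact_mod_cast e2
    obtain ⟨e, x, y, z, w, he0, heN, hx0, hexx, hpxy, hqxz, hmexw, hrel⟩ :=
      key_int (N:ℤ) α p q m hα1 f1 f2 f3 f4 f5 fdet
    set t : ℝ := Real.sqrt ((e : ℤ) : ℝ) with htdef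
    have heR : (0:ℝ) < ((e:ℤ):ℝ) := by exact_mod_cast he0
    have ht2 : t * t = ((e:ℤ):ℝ) := Real.mul_self_sqrt heR.le
    have ht0 : t ≠ 0 := (Real.sqrt_pos.2 heR).ne'
    have hxR : ((x:ℤ):ℝ) ≠ 0 := by
      have : (0:ℝ) < ((x:ℤ):ℝ) := by exact_mod_cast hx0
      exact this.ne'
    have hαR : ((α:ℤ):ℝ) = ((x:ℝ)*t) * ((x:ℝ)*t) := by
      have : ((α:ℤ):ℝ) = ((e * (x*x) : ℤ) : ℝ) := by exact_mod_cast hexx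
      push_cast at this ⊢
      rw [this, ← ht2]; ring
    have hacase : (a - (x:ℝ)*t) * (a + (x:ℝ)*t) = 0 := by
      linear_combination hα + hαR
    have hpR : ((p:ℤ):ℝ) = (x:ℝ)*(y:ℝ) := by exact_mod_cast hpxy
    have hqR : ((q:ℤ):ℝ) = (x:ℝ)*(z:ℝ) := by exact_mod_cast hqxz
    have hmR : ((m:ℤ):ℝ) = (e:ℝ)*(x:ℝ)*(w:ℝ) := by exact_mod_cast hmexw
    have hcop : IsCoprime (e:ℤ) ((N:ℤ)/e) := ⟨x*w, -(y*z), by linarith [hrel]⟩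
    rcases mul_eq_zero.1 hacase with hac | hac
    · -- a = x * t
      have haval : a = (x:ℝ)*t := by linarith
      refine ⟨e, x, y, z, w, he0, heN, hcop, hrel, ?_, ?_, ?_, ?_⟩
      · rw [← hadef, eq_div_iff ht0, haval]; push_cast
        linear_combination (x:ℝ)*ht2
      · rw [← hbdef, eq_div_iff ht0]
        apply mul_left_cancel₀ hxR
        rw [haval, hpR] at hab
        push_cast
        linear_combination hab
      · rw [← hcdef, eq_div_iff ht0]
        apply mul_left_cancel₀ hxR
        rw [haval, hqR] at hq
        push_cast
        linear_combination hq
      · rw [← hddef, eq_div_iff ht0]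
        apply mul_left_cancel₀ hxR
        rw [haval, hmR] at had
        push_cast
        linear_combination had
    · -- a = -(x * t)
      have haval : a = -((x:ℝ)*t) := by linarith
      have hxR' : (((-x :ℤ)):ℝ) ≠ 0 := by push_cast; simpa using hxR
      refine ⟨e, -x, -y, -z, -w, he0, heN, hcop, by linarith [hrel], ?_, ?_, ?_, ?_⟩
      · rw [← hadef, eq_div_iff ht0, haval]; push_cast
        linear_combination (-(x:ℝ))*ht2
      · rw [← hbdef, eq_div_iff ht0]
        apply mul_left_cancel₀ hxR
        rw [haval, hpR] at hab
        push_cast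
        linear_combination (-1:ℝ)*hab
      · rw [← hcdef, eq_div_iff ht0]
        apply mul_left_cancel₀ hxR
        rw [haval, hqR] at hq
        push_cast
        linear_combination (-1:ℝ)*hq
      · rw [← hddef, eq_div_iff ht0]
        apply mul_left_cancel₀ hxR
        rw [haval, hmR] at had
        push_cast
        linear_combination (-1:ℝ)*had

end Gamma0StarAux

/-- **The special orthogonal group of the lattice `M` is `Γ₀(N)*`.**
An element `X ∈ SL₂(ℝ)`, acting on symmetric matrices by `v ↦ XvXᵗ` (an orthogonal
transformation for the form `(v,v) = −2N·det v`), preserves the lattice `M` if and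
only if `X` lies in the extension `Γ₀(N)*` of `Γ₀(N)` by all Atkin–Lehner
involutions. -/
theorem specialOrthogonalGroup_eq_Gamma0Star (N : ℕ) (hN : 0 < N)
    (X : Matrix.SpecialLinearGroup (Fin 2) ℝ) :
    ((∀ v ∈ LatticeM N, X.1 * v * X.1.transpose ∈ LatticeM N) ∧
      (∀ v ∈ LatticeM N, (X⁻¹).1 * v * (X⁻¹).1.transpose ∈ LatticeM N)) ↔
    X ∈ Gamma0Star N := by
  constructor
  · rintro ⟨h1, h2⟩
    exact Subgroup.subset_closure (Or.inr (Gamma0StarAux.forward hN h1 h2))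
  · intro hX
    have h := Gamma0StarAux.backward hN hX
    exact h
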